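/- Let φ be an admissible function and 0 < q < ∞. Then there exist constants c, C > 0 (depending only on φ and q) such that for all r ≥ 1: c·(φ(1 + log r)·r^{1/q} − 1) ≤ ∫₁^r φ(1 + log s) s^{1/q − 1} ds ≤ C·(φ(1 + log r)·r^{1/q} − 1). -/

import Mathlib

open Real MeasureTheory

theorem stmt4 (φ : ℝ → ℝ) (γ β : ℝ) (hγ : 0 < γ) (hβ : 0 < β)
    (hmap : ∀ x : ℝ, 1 ≤ x → 1 ≤ φ x)
    (hφ1 : φ 1 = 1)
    (hconc : ConcaveOn ℝ (Set.Ici (1 : ℝ)) (fun x => Real.log (φ x)))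
    (hder : ∀ x : ℝ, 1 ≤ x → γ / x ≤ deriv φ x / φ x ∧ deriv φ x / φ x ≤ β / x)
    (q : ℝ) (hq : 0 < q) :
    ∃ c C : ℝ, 0 < c ∧ 0 < C ∧ ∀ r : ℝ, 1 ≤ r →
      c * (φ (1 + Real.log r) * r ^ (1 / q) - 1) ≤
        (∫ s in (1 : ℝ)..r, φ (1 + Real.log s) * s ^ (1 / q - 1)) ∧
      (∫ s in (1 : ℝ)..r, φ (1 + Real.log s) * s ^ (1 / q - 1)) ≤
        C * (φ (1 + Real.log r) * r ^ (1 / q) - 1) := by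
  have hφpos : ∀ x : ℝ, 1 ≤ x → 0 < φ x := fun x hx => lt_of_lt_of_le one_pos (hmap x hx)
  have hdiff : ∀ x : ℝ, 1 ≤ x → DifferentiableAt ℝ φ x := by
    intro x hx
    by_contra h
    have h0 : deriv φ x = 0 := deriv_zero_of_not_differentiableAt h
    have h1 := (hder x hx).1
    rw [h0, zero_div] at h1
    have hx0 : (0:ℝ) < x := lt_of_lt_of_le one_pos hx
    exact absurd h1 (not_le.mpr (div_pos hγ hx0))
  have hlb : ∀ x : ℝ, 1 ≤ x → γ / x * φ x ≤ deriv φ x := fun x hx =>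
    (le_div_iff₀ (hφpos x hx)).mp (hder x hx).1
  have hub : ∀ x : ℝ, 1 ≤ x → deriv φ x ≤ β * φ x := by
    intro x hx
    have hx0 : (0:ℝ) < x := lt_of_lt_of_le one_pos hx
    have h2 := (hder x hx).2
    rw [div_le_div_iff₀ (hφpos x hx) hx0] at h2
    have hd0 : 0 ≤ deriv φ x :=
      le_trans (mul_pos (div_pos hγ hx0) (hφpos x hx)).le (hlb x hx)
    nlinarith
  have hcont : ContinuousOn φ (Set.Ici 1) := fun x hx =>
    (hdiff x hx).continuousAt.continuousWithinAt
  have hmono : MonotoneOn φ (Set.Ici 1) := by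
    refine (strictMonoOn_of_deriv_pos (convex_Ici 1) hcont ?_).monotoneOn
    intro x hx
    rw [interior_Ici] at hx
    have hx1 : (1:ℝ) ≤ x := le_of_lt hx
    have hx0 : (0:ℝ) < x := lt_trans one_pos hx
    exact lt_of_lt_of_le (mul_pos (div_pos hγ hx0) (hφpos x hx1)) (hlb x hx1)
  have hlog : ∀ s : ℝ, 1 ≤ s → 1 ≤ 1 + Real.log s := by
    intro s hs
    have := Real.log_nonneg hs
    linarith
  set f : ℝ → ℝ := fun s => φ (1 + Real.log s) * s ^ (1 / q - 1) with hfdef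
  have hfc : ∀ s : ℝ, 1 ≤ s → ContinuousAt f s := by
    intro s hs
    have hs0 : (0:ℝ) < s := lt_of_lt_of_le one_pos hs
    have h1 : ContinuousAt (fun u : ℝ => 1 + Real.log u) s :=
      continuousAt_const.add (Real.continuousAt_log hs0.ne')
    have h2 := ContinuousAt.comp (x := s) (hdiff _ (hlog s hs)).continuousAt h1
    have h3 : ContinuousAt (fun u : ℝ => u ^ (1/q - 1)) s :=
      Real.continuousAt_rpow_const s _ (Or.inl hs0.ne')
    exact h2.mul h3
  have hfint : ∀ r : ℝ, 1 ≤ r → IntervalIntegrable f volume 1 r := by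
    intro r hr
    apply ContinuousOn.intervalIntegrable
    rw [Set.uIcc_of_le hr]
    exact fun s hs => (hfc s hs.1).continuousWithinAt
  have hq' : (0:ℝ) < 1/q := by positivity
  refine ⟨(β + 1/q)⁻¹, q, by positivity, hq, ?_⟩
  intro r hr
  have hr0 : (0:ℝ) < r := lt_of_lt_of_le one_pos hr
  have hφr1 : 1 ≤ φ (1 + Real.log r) := hmap _ (hlog r hr)
  constructor
  · -- lower bound
    set H : ℝ → ℝ := fun u => (β + 1/q) * (∫ s in (1:ℝ)..u, f s) -
      (φ (1 + Real.log u) * u ^ (1/q) - 1) with hHdef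
    have hH1 : H 1 = 0 := by
      simp [hHdef, Real.log_one, hφ1, Real.one_rpow]
    have hHd : ∀ u : ℝ, 1 < u → HasDerivAt H ((β + 1/q) * f u -
        (deriv φ (1 + Real.log u) * u⁻¹ * u ^ (1/q) +
          φ (1 + Real.log u) * (1/q * u ^ (1/q - 1)))) u := by
      intro u hu
      have hu0 : (0:ℝ) < u := lt_trans one_pos hu
      have hu1 : (1:ℝ) ≤ u := hu.le
      have hmeas : StronglyMeasurableAtFilter f (nhds u) volume := by
        refine ContinuousAt.stronglyMeasurableAtFilter (s := Set.Ioi (1:ℝ)) isOpen_Ioi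
          (fun x hx => hfc x (le_of_lt hx)) u hu
      have hInt : HasDerivAt (fun v => ∫ s in (1:ℝ)..v, f s) (f u) u :=
        intervalIntegral.integral_hasDerivAt_right (hfint u hu1) hmeas (hfc u hu1)
      have hlogd : HasDerivAt (fun v : ℝ => 1 + Real.log v) u⁻¹ u :=
        (Real.hasDerivAt_log hu0.ne').const_add 1
      have hφd : HasDerivAt (fun v : ℝ => φ (1 + Real.log v))
          (deriv φ (1 + Real.log u) * u⁻¹) u := by
        exact
          ((hdiff _ (hlog u hu1)).hasDerivAt.comp u hlogd)
      have hrp : HasDerivAt (fun v : ℝ => v ^ (1/q)) (1/q * u ^ (1/q - 1)) u :=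
        Real.hasDerivAt_rpow_const (Or.inl hu0.ne')
      exact (hInt.const_mul (β + 1/q)).sub ((hφd.mul hrp).sub_const 1)
    have hHmono : MonotoneOn H (Set.Icc 1 r) := by
      apply monotoneOn_of_deriv_nonneg (convex_Icc 1 r)
      · -- continuity
        apply ContinuousOn.sub
        · exact continuousOn_const.mul
            ((intervalIntegral.continuousOn_primitive_interval' (hfint r hr)
              Set.left_mem_uIcc).mono (by rw [Set.uIcc_of_le hr]))
        · intro u hu
          have hu1 : (1:ℝ) ≤ u := hu.1
          have hu0 : (0:ℝ) < u := lt_of_lt_of_le one_pos hu1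
          have h1 : ContinuousAt (fun v : ℝ => 1 + Real.log v) u :=
            continuousAt_const.add (Real.continuousAt_log hu0.ne')
          have h2 := ContinuousAt.comp (x := u) (hdiff _ (hlog u hu1)).continuousAt h1
          have h3 : ContinuousAt (fun v : ℝ => v ^ (1/q)) u :=
            Real.continuousAt_rpow_const u _ (Or.inl hu0.ne')
          exact ((h2.mul h3).sub continuousAt_const).continuousWithinAt
      · rw [interior_Icc]
        exact fun u hu => (hHd u hu.1).differentiableAt.differentiableWithinAt
      · rw [interior_Icc]
        intro u hu
        rw [(hHd u hu.1).deriv]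
        have hu0 : (0:ℝ) < u := lt_trans one_pos hu.1
        have hu1 : (1:ℝ) ≤ u := hu.1.le
        have hx1 : (1:ℝ) ≤ 1 + Real.log u := hlog u hu1
        have key : u⁻¹ * u ^ (1/q) = u ^ (1/q - 1) := by
          rw [Real.rpow_sub hu0, Real.rpow_one, inv_mul_eq_div]
        have hubx := hub _ hx1
        have hpow : (0:ℝ) ≤ u ^ (1/q - 1) := Real.rpow_nonneg hu0.le _
        have hφx : (0:ℝ) < φ (1 + Real.log u) := hφpos _ hx1
        have : deriv φ (1 + Real.log u) * u⁻¹ * u ^ (1/q) =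
            deriv φ (1 + Real.log u) * u ^ (1/q - 1) := by
          rw [mul_assoc, key]
        rw [this, hfdef]
        nlinarith
    have hge : 0 ≤ H r := by
      rw [← hH1]
      exact hHmono (Set.left_mem_Icc.mpr hr) (Set.right_mem_Icc.mpr hr) hr
    have hGF : φ (1 + Real.log r) * r ^ (1/q) - 1 ≤
        (β + 1/q) * ∫ s in (1:ℝ)..r, f s := by
      simp only [hHdef] at hge
      linarith
    have hA : (0:ℝ) < β + 1/q := by positivity
    calc (β + 1/q)⁻¹ * (φ (1 + Real.log r) * r ^ (1/q) - 1)
        ≤ (β + 1/q)⁻¹ * ((β + 1/q) * ∫ s in (1:ℝ)..r, f s) :=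
          mul_le_mul_of_nonneg_left hGF (inv_nonneg.mpr hA.le)
      _ = ∫ s in (1:ℝ)..r, f s := by
          rw [← mul_assoc, inv_mul_cancel₀ hA.ne', one_mul]
  · -- upper bound
    have key : (∫ s in (1:ℝ)..r, f s) ≤
        ∫ s in (1:ℝ)..r, φ (1 + Real.log r) * s ^ (1/q - 1) := by
      apply intervalIntegral.integral_mono_on hr (hfint r hr)
      · apply ContinuousOn.intervalIntegrable
        rw [Set.uIcc_of_le hr]
        intro s hs
        have hs0 : (0:ℝ) < s := lt_of_lt_of_le one_pos hs.1
        exact (continuousAt_const.mul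
          (Real.continuousAt_rpow_const s _ (Or.inl hs0.ne'))).continuousWithinAt
      · intro s hs
        have hs1 : (1:ℝ) ≤ s := hs.1
        have hs0 : (0:ℝ) < s := lt_of_lt_of_le one_pos hs1
        have hmle : φ (1 + Real.log s) ≤ φ (1 + Real.log r) := by
          apply hmono (hlog s hs1) (hlog r hr)
          have := Real.log_le_log hs0 hs.2
          linarith
        exact mul_le_mul_of_nonneg_right hmle (Real.rpow_nonneg hs0.le _)
    rw [intervalIntegral.integral_const_mul,
      integral_rpow (Or.inl (by linarith : (-1:ℝ) < 1/q - 1))] at key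
    have h1q : 1/q - 1 + 1 = 1/q := by ring
    rw [h1q, Real.one_rpow] at key
    have heq : φ (1 + Real.log r) * ((r ^ (1/q) - 1) / (1/q)) =
        q * (φ (1 + Real.log r) * r ^ (1/q) - φ (1 + Real.log r)) := by
      field_simp
    rw [heq] at key
    have : q * (φ (1 + Real.log r) * r ^ (1/q) - φ (1 + Real.log r)) ≤
        q * (φ (1 + Real.log r) * r ^ (1/q) - 1) := by
      apply mul_le_mul_of_nonneg_left _ hq.le
      linarith
    linarith
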